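/- arXiv:1601.05292 — 2 statements merged into one kernel-verified Lean document; each statement's English description precedes it below -/
import Mathlib

section
/- For every k ≥ 1, the Laurent polynomial W k is nonzero and mindeg (W k) = -4k - 8. (Equivalently, in the variable t = z², deg_L(V(W_n(B₃))) = -n - 4 for every even n ≥ 2.) -/
open LaurentPolynomial

noncomputable def U : LaurentPolynomial ℤ := -T 1 - T (-1)

noncomputable def Q3 : LaurentPolynomial ℤ :=
  T 9 - 2 * T 7 + T 5 - 2 * T 3 - 2 * T 1 - 2 * T (-1) - 2 * T (-3) + T (-5)
    - 2 * T (-7) + T (-9)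

/-- The maximum exponent in the support of a Laurent polynomial. -/
noncomputable def maxdeg (p : LaurentPolynomial ℤ) : WithBot ℤ := p.coeff.support.max

/-- The minimum exponent in the support of a Laurent polynomial. -/
noncomputable def mindeg (p : LaurentPolynomial ℤ) : WithTop ℤ := p.coeff.support.min

/-- The skein operator encoding the relation between Jones polynomials of
successive Whitehead doubles of `B₃`. -/
noncomputable def Phi (p : LaurentPolynomial ℤ) : LaurentPolynomial ℤ :=
  T (-4) * p + (T (-3) - T (-1)) * Q3

/-- Coefficient of a Laurent polynomial, as a plain function. -/
noncomputable def co (p : LaurentPolynomial ℤ) : ℤ → ℤ := fun n => p.coeff n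

lemma co_add (p q : LaurentPolynomial ℤ) (n : ℤ) : co (p + q) n = co p n + co q n :=
  Finsupp.add_apply p.coeff q.coeff n

lemma co_sub (p q : LaurentPolynomial ℤ) (n : ℤ) : co (p - q) n = co p n - co q n :=
  Finsupp.sub_apply p.coeff q.coeff n

lemma co_T (e n : ℤ) : co (T e) n = if e = n then 1 else 0 :=
  show Finsupp.single e (1 : ℤ) n = _ from Finsupp.single_apply

lemma co_T_mul (p : LaurentPolynomial ℤ) (e n : ℤ) : co (T e * p) n = co p (-e + n) := by
  have := AddMonoidAlgebra.coeff_single_mul_apply p (1 : ℤ) e n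
  exact this.trans (one_mul _)

lemma co_two_mul (p : LaurentPolynomial ℤ) (n : ℤ) :
    co ((2 : LaurentPolynomial ℤ) * p) n = 2 * co p n := by
  have h2 : (2 : LaurentPolynomial ℤ) = AddMonoidAlgebra.single 0 2 := by
    rw [single_eq_C]; norm_num
  rw [h2]
  have := AddMonoidAlgebra.coeff_single_mul_apply p (2 : ℤ) (0 : ℤ) n
  simpa [co] using this

set_option maxHeartbeats 1000000 in
lemma co_Q3_split (n : ℤ) : co Q3 n =
    ((((((((((if (9:ℤ) = n then 1 else 0) - 2 * if (7:ℤ) = n then 1 else 0)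
      + if (5:ℤ) = n then 1 else 0) - 2 * if (3:ℤ) = n then 1 else 0)
      - 2 * if (1:ℤ) = n then 1 else 0) - 2 * if (-1:ℤ) = n then 1 else 0)
      - 2 * if (-3:ℤ) = n then 1 else 0) + if (-5:ℤ) = n then 1 else 0)
      - 2 * if (-7:ℤ) = n then 1 else 0) + if (-9:ℤ) = n then 1 else 0) := by
  rw [Q3]
  rw [co_add, co_sub, co_add, co_sub, co_sub, co_sub, co_sub, co_add, co_sub,
    co_two_mul, co_two_mul, co_two_mul, co_two_mul, co_two_mul, co_two_mul,
    co_T, co_T, co_T, co_T, co_T, co_T, co_T, co_T, co_T, co_T]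

set_option maxHeartbeats 1000000 in
lemma co_Q3_low {n : ℤ} (h : n < -9) : co Q3 n = 0 := by
  rw [co_Q3_split]
  split_ifs <;> omega

set_option maxHeartbeats 1000000 in
lemma co_Q3_neg9 : co Q3 (-9) = 1 := by
  rw [co_Q3_split]
  norm_num

lemma U2_eq : U ^ 2 = T (1 + 1) + 2 * T (1 + -1) + T (-1 + -1) := by
  rw [T_add, T_add, T_add, U]; ring

lemma co_U2_low {n : ℤ} (h : n < -2) : co (U ^ 2) n = 0 := by
  rw [U2_eq]
  simp only [co_add, co_two_mul, co_T]
  split_ifs <;> omega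

lemma co_Phi (p : LaurentPolynomial ℤ) (n : ℤ) :
    co (Phi p) n = co p (4 + n) + (co Q3 (3 + n) - co Q3 (1 + n)) := by
  simp only [Phi, sub_mul, co_add, co_sub, co_T_mul]
  norm_num

lemma mindeg_eq {p : LaurentPolynomial ℤ} {m : ℤ} (h1 : co p m ≠ 0)
    (h2 : ∀ n, n < m → co p n = 0) : mindeg p = (m : WithTop ℤ) := by
  have hmem : m ∈ p.coeff.support := Finsupp.mem_support_iff.mpr h1
  refine le_antisymm (Finset.min_le hmem) (Finset.le_min ?_)
  intro n hn
  rw [Finsupp.mem_support_iff] at hn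
  by_contra hlt
  push_neg at hlt
  rw [WithTop.coe_lt_coe] at hlt
  exact hn (h2 n hlt)

lemma p_ne_zero {p : LaurentPolynomial ℤ} {m : ℤ} (h1 : co p m ≠ 0) : p ≠ 0 := by
  intro h
  apply h1
  rw [h]
  simp [co]

/-- The Jones polynomials of the Whitehead even doubles `W_{2k}(B₃)` have
lowest degree `-4k - 8` in `z`. -/
theorem mindeg_W_even (W : ℕ → LaurentPolynomial ℤ) (hW0 : W 0 = U ^ 2)
    (hWrec : ∀ k : ℕ, W (k + 1) = Phi (W k)) :
    ∀ k : ℕ, 1 ≤ k →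
      W k ≠ 0 ∧ mindeg (W k) = ((-4 * (k : ℤ) - 8 : ℤ) : WithTop ℤ) := by
  have key : ∀ k : ℕ, 1 ≤ k →
      co (W k) (-4 * (k : ℤ) - 8) = 1 ∧
        ∀ n : ℤ, n < -4 * (k : ℤ) - 8 → co (W k) n = 0 := by
    intro k hk
    induction k with
    | zero => omega
    | succ k ih =>
      rcases Nat.eq_or_lt_of_le hk with h1 | h1
      · -- k + 1 = 1, i.e. k = 0
        have hk0 : k = 0 := by omega
        subst hk0
        rw [hWrec 0, hW0]
        constructor
        · have : (-4 : ℤ) * ((1 : ℕ) : ℤ) - 8 = -12 := by norm_num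
          rw [this, co_Phi]
          have e1 : (3 : ℤ) + -12 = -9 := by norm_num
          rw [co_U2_low (by norm_num), e1, co_Q3_neg9, co_Q3_low (by norm_num)]
          norm_num
        · intro n hn
          have hn' : n < -12 := by push_cast at hn ⊢; omega
          rw [co_Phi, co_U2_low (by omega), co_Q3_low (by omega),
            co_Q3_low (by omega)]
          ring
      · -- k ≥ 1
        have hk1 : 1 ≤ k := by omega
        obtain ⟨ih1, ih2⟩ := ih hk1
        rw [hWrec k]
        have hcast : (-4 : ℤ) * ((k + 1 : ℕ) : ℤ) - 8 = (-4 * (k : ℤ) - 8) - 4 := by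
          push_cast; ring
        constructor
        · rw [hcast, co_Phi]
          have h4 : 4 + (-4 * (k : ℤ) - 8 - 4) = -4 * (k : ℤ) - 8 := by ring
          rw [h4, ih1, co_Q3_low (by omega), co_Q3_low (by omega)]
          ring
        · intro n hn
          rw [hcast] at hn
          rw [co_Phi, ih2 (4 + n) (by omega), co_Q3_low (by omega),
            co_Q3_low (by omega)]
          ring
  intro k hk
  obtain ⟨h1, h2⟩ := key k hk
  exact ⟨p_ne_zero (by rw [h1]; norm_num), mindeg_eq (by rw [h1]; norm_num) h2⟩
end

section
/- Fix m ≥ 3. The Laurent polynomials Wₘ k (for k ≥ 1) are pairwise distinct, and Wₘ k ≠ U^(m-1) for every k ≥ 1, where U := -z - z⁻¹. (Hence the links W_n(B_m) for even n ≥ 2 are pairwise non-isotopic and none is isotopic to the m-component unlink.) -/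
open LaurentPolynomial

/-- The unit `2` of `ℚ`. -/
noncomputable def twoU : ℚˣ := Units.mkOfMulEqOne 2 (1/2) (by norm_num)

/-- Evaluation of Laurent polynomials at `T 1 ↦ 2`. -/
noncomputable def ev : LaurentPolynomial ℤ →ₐ[ℤ] ℚ :=
  AddMonoidAlgebra.lift ℤ ℚ ℤ ((Units.coeHom ℚ).comp (zpowersHom ℚˣ twoU))

lemma ev_T (n : ℤ) : ev (T n) = (2:ℚ)^n := by
  have h : (T n : LaurentPolynomial ℤ) = AddMonoidAlgebra.single n 1 := rfl
  rw [ev, h, AddMonoidAlgebra.lift_single]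
  simp only [one_smul, MonoidHom.comp_apply, zpowersHom_apply, Units.coeHom_apply,
    Units.val_zpow_eq_zpow_val]
  rfl

lemma ev_U : ev U = -(5/2 : ℚ) := by
  simp only [U, map_sub, map_neg, ev_T]
  norm_num [zpow_neg]

lemma ev_A : ev (T 5 - T 3 - T (-3) + T (-5)) = (765/32 : ℚ) := by
  simp only [map_sub, map_add, ev_T]
  norm_num [zpow_neg]

lemma ev_B : ev (T 4 - 2 * T 2 + 3 - 2 * T (-2) + T (-4)) = (169/16 : ℚ) := by
  simp only [map_sub, map_add, map_mul, map_ofNat, ev_T]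
  norm_num [zpow_neg]

lemma ev_Q3 : ev Q3 = (136585 / 512 : ℚ) := by
  simp only [Q3, map_sub, map_add, map_mul, map_ofNat, ev_T]
  norm_num [zpow_neg]

lemma step_identity (i : ℕ) (n : ℤ) :
    (2:ℚ)^(5*(i+1)+9) * (((n:ℚ)/2^(5*i+9))*(765/32) + (-(5/2):ℚ)^(i+4)*(169/16))
      = ((765*n + (-5)^(i+4)*169*2^(4*i+6) : ℤ) : ℚ) := by
  have h1 : (-(5/2):ℚ)^(i+4) = (-5:ℚ)^(i+4)/2^(i+4) := by
    rw [show (-(5/2):ℚ) = (-5)/2 by norm_num, div_pow]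
  rw [h1]
  have h2 : (2:ℚ)^(5*i+9) ≠ 0 := by positivity
  have h3 : (2:ℚ)^(i+4) ≠ 0 := by positivity
  push_cast
  field_simp
  ring

/-- For fixed `m ≥ 3`, the Jones polynomials of `W_{2k}(B_m)`, `k ≥ 1`, are
pairwise distinct and distinct from that of the `m`-component unlink. -/
theorem jones_W_general_pairwise_distinct (m : ℕ) (hm : 3 ≤ m)
    (V : ℕ → LaurentPolynomial ℤ) (hV3 : V 3 = Q3)
    (hVrec : ∀ j : ℕ, 3 ≤ j → V (j + 1) =
      V j * (T 5 - T 3 - T (-3) + T (-5)) +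
        U ^ (j + 1) * (T 4 - 2 * T 2 + 3 - 2 * T (-2) + T (-4)))
    (Wm : ℕ → LaurentPolynomial ℤ) (hWm0 : Wm 0 = U ^ (m - 1))
    (hWmrec : ∀ k : ℕ, Wm (k + 1) = T (-4) * Wm k + (T (-3) - T (-1)) * V m) :
    (∀ k l : ℕ, 1 ≤ k → 1 ≤ l → k ≠ l → Wm k ≠ Wm l) ∧
    (∀ k : ℕ, 1 ≤ k → Wm k ≠ U ^ (m - 1)) := by
  -- the odd-numerator invariant for `ev (V (i+3))`
  have key : ∀ i : ℕ, ∃ n : ℤ, Odd n ∧ (2:ℚ)^(5*i+9) * ev (V (i+3)) = (n:ℚ) := by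
    intro i
    induction i with
    | zero =>
      refine ⟨136585, by decide, ?_⟩
      rw [hV3, ev_Q3]; norm_num
    | succ i ih =>
      obtain ⟨n, hodd, hn⟩ := ih
      refine ⟨765*n + (-5)^(i+4)*169*2^(4*i+6), ?_, ?_⟩
      · have h1 : Odd (765*n) := Odd.mul (by decide) hodd
        have h2 : Even ((-5:ℤ)^(i+4)*169*2^(4*i+6)) :=
          ⟨(-5)^(i+4)*169*2^(4*i+5), by ring⟩
        exact h1.add_even h2
      · have hx : ev (V (i+3)) = (n:ℚ)/2^(5*i+9) := by
          field_simp
          linarith [hn]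
        have hrec := hVrec (i+3) (by omega)
        rw [show i+3+1 = (i+1)+3 by omega] at hrec
        rw [hrec, map_add, map_mul, map_mul, map_pow, ev_A, ev_B, ev_U, hx,
          show i+3+1 = i+4 by omega]
        exact step_identity i n
  -- specialize to m
  obtain ⟨i, rfl⟩ : ∃ i, m = i + 3 := ⟨m - 3, by omega⟩
  obtain ⟨n, hodd, hn⟩ := key i
  set v : ℚ := ev (V (i+3)) with hv
  -- the distance to the fixed point is nonzero
  set d : ℚ := (-(5/2):ℚ)^(i+2) + (2/5)*v with hd
  have hdne : d ≠ 0 := by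
    intro h0
    rw [hd] at h0
    have hveq : v = (-(5/2):ℚ)^(i+3) := by
      have : (2/5)*v = -(-(5/2):ℚ)^(i+2) := by linarith
      have h5 : ((-(5/2):ℚ))^(i+3) = (-(5/2))^(i+2) * (-(5/2)) := pow_succ _ _
      rw [h5]
      linarith [this]
    have hcast : (n:ℚ) = (((-5)^(i+3)*2^(4*i+6) : ℤ) : ℚ) := by
      rw [← hn, hveq, show (-(5/2):ℚ) = (-5)/2 by norm_num, div_pow]
      have h3 : (2:ℚ)^(i+3) ≠ 0 := by positivity
      push_cast
      field_simp
      ring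
    have hne : n = (-5)^(i+3)*2^(4*i+6) := by exact_mod_cast hcast
    have heven : Even n := hne ▸ ⟨(-5)^(i+3)*2^(4*i+5), by ring⟩
    exact (Int.not_even_iff_odd.mpr hodd) heven
  -- closed form for the evaluations
  have hg : ∀ k : ℕ, ev (Wm k) + (2/5)*v = d * (1/16)^k := by
    intro k
    induction k with
    | zero =>
      rw [hWm0, map_pow, ev_U, show i+3-1 = i+2 by omega]
      simp [hd]
    | succ k ih =>
      rw [hWmrec k, map_add, map_mul, map_mul, map_sub, ev_T, ev_T, ev_T, ← hv]
      have h4 : (2:ℚ)^(-4:ℤ) = 1/16 := by norm_num [zpow_neg]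
      have h3 : (2:ℚ)^(-3:ℤ) = 1/8 := by norm_num [zpow_neg]
      have h1 : (2:ℚ)^(-1:ℤ) = 1/2 := by norm_num [zpow_neg]
      rw [h4, h3, h1]
      have : ev (Wm k) = d * (1/16)^k - (2/5)*v := by linarith [ih]
      rw [this, pow_succ]
      ring
  -- evaluations are injective in k
  have hinj : ∀ k l : ℕ, Wm k = Wm l → k = l := by
    intro k l hkl
    have h1 : d * (1/16:ℚ)^k = d * (1/16)^l := by
      have := congrArg (fun p => ev p + (2/5)*v) hkl
      simpa only [hg k, hg l] using this
    have h2 : ((1:ℚ)/16)^k = (1/16)^l := mul_left_cancel₀ hdne h1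
    have h3 : (16:ℚ)^k = 16^l := by
      have := congrArg (fun x : ℚ => x⁻¹) h2
      simpa [one_div, ← inv_pow] using this
    have h4 : ((16^k : ℕ) : ℚ) = ((16^l : ℕ) : ℚ) := by push_cast; exact h3
    exact Nat.pow_right_injective (by norm_num) (Nat.cast_injective h4)
  constructor
  · intro k l _ _ hne heq
    exact hne (hinj k l heq)
  · intro k hk heq
    have : Wm k = Wm 0 := by rw [hWm0]; exact heq
    exact absurd (hinj k 0 this) (by omega)
end
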